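/- For β > 1 and any nonnegative sequence (a_t)_{t≥1} with Σ_t a_t = 1, we have Σ_{t=1}^∞ exp(-β Σ_{t'≤t} a_{t'} ln(t/t')) ≤ (β/(β-1)) · Σ_{t=1}^∞ t·a_t. -/

import Mathlib

private lemma bern_aux {β a b : ℝ} (hβ : 1 < β) (ha : 0 < a) (hab : a ≤ b) :
    (β - 1) * (b - a) * b ^ (-β) ≤ a ^ (1 - β) - b ^ (1 - β) := by
  have hb : 0 < b := lt_of_lt_of_le ha hab
  have hq : 0 < a / b := div_pos ha hb
  have hb1 : 0 < b ^ (1 - β) := Real.rpow_pos_of_pos hb _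
  have h2 : 1 + (β - 1) * (1 - a / b) ≤ (a / b) ^ (1 - β) := by
    rw [Real.rpow_def_of_pos hq]
    have l1 : Real.log (a / b) ≤ a / b - 1 := Real.log_le_sub_one_of_pos hq
    have l2 : Real.log (a / b) * (1 - β) + 1 ≤ Real.exp (Real.log (a / b) * (1 - β)) :=
      Real.add_one_le_exp _
    nlinarith [mul_le_mul_of_nonneg_left l1 (by linarith : (0:ℝ) ≤ β - 1)]
  have h3 : b ^ (1 - β) * (1 + (β - 1) * (1 - a / b)) ≤ b ^ (1 - β) * ((a / b) ^ (1 - β)) :=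
    mul_le_mul_of_nonneg_left h2 hb1.le
  have h4 : b ^ (1 - β) * (a / b) ^ (1 - β) = a ^ (1 - β) := by
    rw [Real.div_rpow ha.le hb.le]
    field_simp
  have h5 : b ^ (1 - β) = b ^ (-β) * b := by
    rw [show (1 - β) = -β + 1 by ring, Real.rpow_add_one hb.ne']
  have h6 : b ^ (1 - β) * (1 - a / b) = (b - a) * b ^ (-β) := by
    rw [h5]; field_simp
  nlinarith [h3, h4, h6]

private lemma pnat_tsum_eq (f : ℕ → ℝ) (hf : f 0 = 0) :
    ∑' t : ℕ+, f (t : ℕ) = ∑' k : ℕ, f k := by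
  refine Function.Injective.tsum_eq PNat.coe_injective ?_
  intro x hx
  have hx0 : x ≠ 0 := by
    intro h; exact hx (by rw [h]; exact hf)
  exact ⟨⟨x, Nat.pos_of_ne_zero hx0⟩, rfl⟩

theorem mssc_kernel_ratio_bound
    (β : ℝ) (hβ : 1 < β) (a : ℕ → ℝ)
    (hnn : ∀ t, 0 ≤ a t)
    (hfin : (Function.support a).Finite)
    (hsum : ∑' t : ℕ+, a (t : ℕ) = 1) :
    ∑' t : ℕ+, Real.exp (-β * ∑ t' ∈ Finset.Icc 1 (t : ℕ),
        a t' * Real.log ((t : ℝ) / (t' : ℝ))) ≤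
      (β / (β - 1)) * ∑' t : ℕ+, (t : ℝ) * a (t : ℕ) := by
  have hβ0 : (0:ℝ) < β := lt_trans one_pos hβ
  have hβ1 : (0:ℝ) < β - 1 := by linarith
  -- support bound
  obtain ⟨N₀, hN₀⟩ : ∃ N₀ : ℕ, ∀ m, N₀ < m → a m = 0 := by
    obtain ⟨N₀, hN₀⟩ := hfin.bddAbove
    refine ⟨N₀, fun m hm => ?_⟩
    by_contra h
    exact absurd (hN₀ (Function.mem_support.2 h)) (not_le.2 hm)
  set T : ℝ := ∑' t : ℕ+, (t : ℝ) * a (t : ℕ) with hT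
  -- finite sum expressions
  have hTs : ∀ M', N₀ ≤ M' → ∑ k ∈ Finset.Icc 1 M', (k : ℝ) * a k = T := by
    intro M' hM'
    have h1 : T = ∑' k : ℕ, (k : ℝ) * a k := by
      rw [hT, ← pnat_tsum_eq (fun k => (k : ℝ) * a k) (by simp)]
    rw [h1, tsum_eq_sum (s := Finset.Icc 1 M')]
    intro k hk
    rcases Nat.eq_zero_or_pos k with h | h
    · simp [h]
    · have : M' < k := by
        by_contra hc
        exact hk (Finset.mem_Icc.2 ⟨h, not_lt.1 hc⟩)
      rw [hN₀ k (lt_of_le_of_lt hM' this), mul_zero]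
  have has : ∀ M', N₀ ≤ M' → ∑ k ∈ Finset.Icc 1 M', a k = 1 := by
    intro M' hM'
    have h1 : (1:ℝ) = ∑' k : ℕ, (if k = 0 then 0 else a k) := by
      rw [← hsum, ← pnat_tsum_eq (fun k => if k = 0 then 0 else a k) (by simp)]
      apply tsum_congr; intro t
      simp [t.ne_zero]
    have h2 : ∑' k : ℕ, (if k = 0 then (0:ℝ) else a k) = ∑ k ∈ Finset.Icc 1 M',
        (if k = 0 then (0:ℝ) else a k) := by
      apply tsum_eq_sum
      intro k hk
      rcases Nat.eq_zero_or_pos k with h | h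
      · simp [h]
      · have : M' < k := by
          by_contra hc
          exact hk (Finset.mem_Icc.2 ⟨h, not_lt.1 hc⟩)
        simp [Nat.pos_iff_ne_zero.1 h, hN₀ k (lt_of_le_of_lt hM' this)]
    rw [h1, h2]
    apply Finset.sum_congr rfl
    intro k hk
    rw [if_neg (Nat.one_le_iff_ne_zero.1 (Finset.mem_Icc.1 hk).1)]
  have hT1 : (1:ℝ) ≤ T := by
    rw [← hTs N₀ le_rfl, ← has N₀ le_rfl]
    apply Finset.sum_le_sum
    intro i hi
    have h1 : (1:ℝ) ≤ (i:ℝ) := by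
      exact_mod_cast (Finset.mem_Icc.1 hi).1
    nlinarith [hnn i]
  have hT0 : (0:ℝ) < T := by linarith
  -- exponent lower bound
  have hE : ∀ n : ℕ, 1 ≤ n →
      Real.log n - Real.log T ≤ ∑ t' ∈ Finset.Icc 1 n, a t' * Real.log ((n:ℝ)/(t':ℝ)) := by
    intro n hn
    set M' := max n N₀ with hM'
    have hnM : n ≤ M' := le_max_left _ _
    have hNM : N₀ ≤ M' := le_max_right _ _
    have hsplit : ∑ t' ∈ Finset.Icc 1 M', a t' * Real.log ((n:ℝ)/(t':ℝ)) ≤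
        ∑ t' ∈ Finset.Icc 1 n, a t' * Real.log ((n:ℝ)/(t':ℝ)) := by
      have e1 := Finset.sum_Ioc_consecutive (fun t' => a t' * Real.log ((n:ℝ)/(t':ℝ)))
        (Nat.zero_le n) hnM
      have e2 : Finset.Ioc 0 n = Finset.Icc 1 n := by
        ext x; simp only [Finset.mem_Ioc, Finset.mem_Icc]; omega
      have e3 : Finset.Ioc 0 M' = Finset.Icc 1 M' := by
        ext x; simp only [Finset.mem_Ioc, Finset.mem_Icc]; omega
      have hnonpos : ∑ t' ∈ Finset.Ioc n M', a t' * Real.log ((n:ℝ)/(t':ℝ)) ≤ 0 := by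
        apply Finset.sum_nonpos
        intro i hi
        obtain ⟨hi1, hi2⟩ := Finset.mem_Ioc.1 hi
        have h1 : (0:ℝ) < (i:ℝ) := by exact_mod_cast lt_of_le_of_lt (Nat.zero_le n) hi1
        apply mul_nonpos_of_nonneg_of_nonpos (hnn i)
        apply Real.log_nonpos (by positivity)
        rw [div_le_one h1]
        exact_mod_cast hi1.le
      rw [e2, e3] at e1
      linarith
    have hlog : ∀ t' ∈ Finset.Icc 1 M', a t' * Real.log (t':ℝ) ≤
        a t' * (Real.log T + (t':ℝ)/T - 1) := by
      intro t' ht'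
      have h1 : (0:ℝ) < (t':ℝ) := by
        exact_mod_cast (Finset.mem_Icc.1 ht').1
      apply mul_le_mul_of_nonneg_left _ (hnn t')
      have h2 : Real.log ((t':ℝ)/T) ≤ (t':ℝ)/T - 1 :=
        Real.log_le_sub_one_of_pos (div_pos h1 hT0)
      rw [Real.log_div h1.ne' hT0.ne'] at h2
      linarith
    have hsum2 : ∑ t' ∈ Finset.Icc 1 M', a t' * (Real.log T + (t':ℝ)/T - 1)
        = Real.log T := by
      have e2 : ∑ t' ∈ Finset.Icc 1 M', a t' * (Real.log T + (t':ℝ)/T - 1)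
          = ∑ t' ∈ Finset.Icc 1 M', (Real.log T * a t' + ((t':ℝ) * a t')/T - a t') := by
        apply Finset.sum_congr rfl
        intro i hi
        field_simp
      rw [e2, Finset.sum_sub_distrib, Finset.sum_add_distrib, ← Finset.sum_div,
        ← Finset.mul_sum, has M' hNM, hTs M' hNM, mul_one, div_self hT0.ne']
      ring
    have hexp : ∑ t' ∈ Finset.Icc 1 M', a t' * Real.log ((n:ℝ)/(t':ℝ))
        = Real.log n * (∑ t' ∈ Finset.Icc 1 M', a t')
          - ∑ t' ∈ Finset.Icc 1 M', a t' * Real.log (t':ℝ) := by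
      rw [Finset.mul_sum, ← Finset.sum_sub_distrib]
      apply Finset.sum_congr rfl
      intro i hi
      have h1 : (0:ℝ) < (i:ℝ) := by exact_mod_cast (Finset.mem_Icc.1 hi).1
      have hn0 : (0:ℝ) < (n:ℝ) := by exact_mod_cast hn
      rw [Real.log_div hn0.ne' h1.ne']
      ring
    have hfin2 := Finset.sum_le_sum hlog
    rw [hsum2] at hfin2
    rw [has M' hNM] at hexp
    linarith
  -- piecewise kernel bound
  set C : ℝ := T ^ β with hC
  have hC0 : 0 < C := Real.rpow_pos_of_pos hT0 β
  set G : ℕ → ℝ := fun k => min 1 (C * (k:ℝ) ^ (-β)) with hG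
  have hG0 : G 0 = 0 := by
    simp only [hG, Nat.cast_zero]
    rw [Real.zero_rpow (by linarith : -β ≠ 0), mul_zero]
    exact min_eq_right zero_le_one
  have hGnn : ∀ k, 0 ≤ G k := by
    intro k
    exact le_min zero_le_one (by positivity)
  have hGsum : Summable G := by
    apply Summable.of_nonneg_of_le hGnn (fun k => min_le_right _ _)
    exact (Real.summable_nat_rpow.2 (by linarith)).mul_left C
  -- telescoping majorant
  set F : ℕ → ℝ := fun k => min (k:ℝ) T + C/(β-1) * (T^(1-β) - (max (k:ℝ) T)^(1-β)) with hF
  have hF0 : F 0 = 0 := by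
    simp only [hF, Nat.cast_zero]
    rw [min_eq_left hT0.le, max_eq_right hT0.le, sub_self, mul_zero, add_zero]
  have hCT : C * T ^ (1-β) = T := by
    rw [hC, ← Real.rpow_add hT0]
    norm_num
  have hFle : ∀ k, F k ≤ β/(β-1) * T := by
    intro k
    have h1 : min ((k:ℝ)) T ≤ T := min_le_right _ _
    have h2 : (0:ℝ) ≤ (max (k:ℝ) T)^(1-β) := Real.rpow_nonneg (le_max_of_le_right hT0.le) _
    have h3 : C/(β-1) * (T^(1-β) - (max (k:ℝ) T)^(1-β)) ≤ C/(β-1) * T^(1-β) := by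
      apply mul_le_mul_of_nonneg_left (by linarith) (by positivity)
    have h4 : C/(β-1) * T^(1-β) = T/(β-1) := by
      rw [div_mul_eq_mul_div, hCT]
    have h5 : T + T/(β-1) = β/(β-1) * T := by
      field_simp
      ring
    calc F k ≤ T + C/(β-1) * T^(1-β) := add_le_add h1 h3
      _ = β/(β-1)*T := by rw [h4, h5]
  have hstep : ∀ k : ℕ, G (k+1) ≤ F (k+1) - F k := by
    intro k
    have hjpos : (0:ℝ) < (k:ℝ) + 1 := by positivity
    have hcast : ((k+1 : ℕ) : ℝ) = (k:ℝ) + 1 := by push_cast; ring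
    by_cases h1 : (k:ℝ) + 1 ≤ T
    · have e : F (k+1) - F k = 1 := by
        simp only [hF, hcast]
        rw [min_eq_left h1, min_eq_left (by linarith), max_eq_right h1,
          max_eq_right (by linarith : (k:ℝ) ≤ T)]
        ring
      rw [e]; exact min_le_left _ _
    · push_neg at h1
      by_cases h2 : T ≤ (k:ℝ)
      · have hk0 : (0:ℝ) < (k:ℝ) := lt_of_lt_of_le hT0 h2
        have bb := bern_aux hβ hk0 (by linarith : (k:ℝ) ≤ (k:ℝ)+1)
        have e : F (k+1) - F k = C/(β-1) * ((k:ℝ)^(1-β) - ((k:ℝ)+1)^(1-β)) := by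
          simp only [hF, hcast]
          rw [min_eq_right (by linarith), min_eq_right h2, max_eq_left (by linarith),
            max_eq_left h2]
          ring
        rw [e]
        refine le_trans (min_le_right _ _) ?_
        rw [hcast]
        have h6 : C/(β-1) * ((β-1) * (((k:ℝ)+1) - k) * ((k:ℝ)+1)^(-β))
            ≤ C/(β-1) * ((k:ℝ)^(1-β) - ((k:ℝ)+1)^(1-β)) :=
          mul_le_mul_of_nonneg_left bb (by positivity)
        have h7 : C/(β-1) * ((β-1) * (((k:ℝ)+1) - k) * ((k:ℝ)+1)^(-β))
            = C * ((k:ℝ)+1)^(-β) := by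
          field_simp
          ring
        linarith
      · push_neg at h2
        have bb := bern_aux hβ hT0 h1.le
        have e : F (k+1) - F k = (T - k) + C/(β-1) * (T^(1-β) - ((k:ℝ)+1)^(1-β)) := by
          simp only [hF, hcast]
          rw [min_eq_right h1.le, min_eq_left h2.le, max_eq_left h1.le, max_eq_right h2.le]
          ring
        rw [e]
        have hc1 : C * ((k:ℝ)+1)^(-β) ≤ 1 := by
          have hle : C ≤ ((k:ℝ)+1)^β := by
            rw [hC]; exact Real.rpow_le_rpow hT0.le h1.le hβ0.le
          rw [Real.rpow_neg hjpos.le, ← div_eq_mul_inv,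
            div_le_one (Real.rpow_pos_of_pos hjpos β)]
          exact hle
        refine le_trans (min_le_right _ _) ?_
        rw [hcast]
        have h6 : C/(β-1) * ((β-1) * (((k:ℝ)+1) - T) * ((k:ℝ)+1)^(-β))
            ≤ C/(β-1) * (T^(1-β) - ((k:ℝ)+1)^(1-β)) :=
          mul_le_mul_of_nonneg_left bb (by positivity)
        have h7 : C/(β-1) * ((β-1) * (((k:ℝ)+1) - T) * ((k:ℝ)+1)^(-β))
            = C * ((k:ℝ)+1)^(-β) * (((k:ℝ)+1) - T) := by
          field_simp
        nlinarith [mul_nonneg (by linarith : (0:ℝ) ≤ 1 - C * ((k:ℝ)+1)^(-β))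
          (by linarith : (0:ℝ) ≤ T - k)]
  have hGle : ∑' k : ℕ, G k ≤ β/(β-1) * T := by
    apply Summable.tsum_le_of_sum_le hGsum
    intro s
    obtain ⟨n, hn⟩ : ∃ n, s ⊆ Finset.range (n+1) :=
      ⟨s.sup id, fun x hx => Finset.mem_range.2 (Nat.lt_succ_of_le (Finset.le_sup (f := id) hx))⟩
    calc ∑ k ∈ s, G k ≤ ∑ k ∈ Finset.range (n+1), G k :=
          Finset.sum_le_sum_of_subset_of_nonneg hn (fun i _ _ => hGnn i)
      _ = ∑ k ∈ Finset.range n, G (k+1) + G 0 := Finset.sum_range_succ' G n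
      _ ≤ ∑ k ∈ Finset.range n, (F (k+1) - F k) + 0 := by
          rw [hG0]
          exact add_le_add_left (Finset.sum_le_sum fun i _ => hstep i) 0
      _ = F n - F 0 := by rw [add_zero, Finset.sum_range_sub F n]
      _ ≤ β/(β-1) * T := by rw [hF0, sub_zero]; exact hFle n
  -- per-term bound
  have hterm : ∀ t : ℕ+, Real.exp (-β * ∑ t' ∈ Finset.Icc 1 (t : ℕ),
      a t' * Real.log ((t : ℝ) / (t' : ℝ))) ≤ G (t : ℕ) := by
    intro t
    have htpos : (0:ℝ) < ((t:ℕ):ℝ) := by exact_mod_cast t.pos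
    have hcast : ((t:ℕ):ℝ) = (t:ℝ) := by norm_cast
    have hE0 : 0 ≤ ∑ t' ∈ Finset.Icc 1 (t : ℕ), a t' * Real.log ((t : ℝ) / (t' : ℝ)) := by
      apply Finset.sum_nonneg
      intro i hi
      obtain ⟨hi1, hi2⟩ := Finset.mem_Icc.1 hi
      have h1 : (0:ℝ) < (i:ℝ) := by exact_mod_cast hi1
      apply mul_nonneg (hnn i)
      apply Real.log_nonneg
      rw [le_div_iff₀ h1, one_mul, ← hcast]
      exact_mod_cast hi2
    refine le_min ?_ ?_
    · rw [Real.exp_le_one_iff]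
      exact mul_nonpos_of_nonpos_of_nonneg (by linarith) hE0
    · have h := hE (t : ℕ) t.pos
      rw [hcast] at h
      calc Real.exp (-β * ∑ t' ∈ Finset.Icc 1 (t : ℕ), a t' * Real.log ((t : ℝ) / (t' : ℝ)))
          ≤ Real.exp (-β * (Real.log (t:ℝ) - Real.log T)) := by
            apply Real.exp_le_exp.2
            nlinarith [h]
        _ = C * ((t:ℕ):ℝ)^(-β) := by
            rw [hC, Real.rpow_def_of_pos hT0, Real.rpow_def_of_pos htpos, ← Real.exp_add,
              hcast]
            congr 1
            ring
  -- put it together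
  have hGps : Summable (fun t : ℕ+ => G (t : ℕ)) :=
    hGsum.comp_injective PNat.coe_injective
  have hLsum : Summable (fun t : ℕ+ => Real.exp (-β * ∑ t' ∈ Finset.Icc 1 (t : ℕ),
      a t' * Real.log ((t : ℝ) / (t' : ℝ)))) :=
    Summable.of_nonneg_of_le (fun t => (Real.exp_pos _).le) hterm hGps
  calc ∑' t : ℕ+, Real.exp (-β * ∑ t' ∈ Finset.Icc 1 (t : ℕ),
        a t' * Real.log ((t : ℝ) / (t' : ℝ)))
      ≤ ∑' t : ℕ+, G (t : ℕ) := Summable.tsum_le_tsum hterm hLsum hGps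
    _ = ∑' k : ℕ, G k := pnat_tsum_eq G hG0
    _ ≤ β/(β-1) * T := hGle
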